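/- Let $E \subset \mathbb{F}_q^2$ with $q$ an odd prime power. Then $M^*(E) := \max_{j \ne 0} \sum_{m \in S_j} |\widehat{E}(m)|^2 \lesssim q^{-3} |E|^{3/2}$, where $S_j = \{m \in \mathbb{F}_q^2 : m_1^2 + m_2^2 = j\}$. -/

import Mathlib

open Finset

noncomputable section

/-- Normalized finite-field Fourier transform of (the indicator of) a finite set
`E ⊆ F^n`, with respect to the additive character `χ`:
`Ê(m) = q^{-n} ∑_{x ∈ E} χ(-x·m)`. -/
def ffFourier {F : Type*} [Field F] [Fintype F] (χ : AddChar F ℂ) {n : ℕ}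
    (E : Finset (Fin n → F)) (m : Fin n → F) : ℂ :=
  ((Fintype.card F : ℂ) ^ n)⁻¹ * ∑ x ∈ E, χ (-(∑ i, x i * m i))

namespace Stmt16Aux

set_option linter.unusedSectionVars false
set_option maxHeartbeats 1000000

variable {F : Type} [Field F] [Fintype F] [DecidableEq F]

lemma char_conj (χ : AddChar F ℂ) (a : F) : (starRingEnd ℂ) (χ a) = χ (-a) := by
  have h : 0 < ringChar F := Nat.pos_of_ne_zero (CharP.ringChar_ne_zero_of_finite F)
  rw [AddChar.starComp_apply h, AddChar.inv_apply]

lemma sum_char_mul (χ : AddChar F ℂ) (hχ : χ ≠ 1) (a : F) :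
    ∑ t : F, χ (t * a) = if a = 0 then (Fintype.card F : ℂ) else 0 := by
  rw [AddChar.sum_mulShift a (AddChar.IsPrimitive.of_ne_one hχ)]
  split_ifs <;> simp

lemma sum_char_dot (χ : AddChar F ℂ) (hχ : χ ≠ 1) (z : Fin 2 → F) :
    ∑ v : Fin 2 → F, χ (∑ i, z i * v i)
      = if z = 0 then ((Fintype.card F : ℂ))^2 else 0 := by
  have key : ∑ v : Fin 2 → F, χ (∑ i, z i * v i)
      = (∑ a : F, χ (a * z 0)) * (∑ b : F, χ (b * z 1)) := by
    rw [Finset.sum_mul_sum]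
    rw [← Equiv.sum_comp (piFinTwoEquiv (fun _ : Fin 2 => F)).symm
      (fun v => χ (∑ i, z i * v i)), Fintype.sum_prod_type]
    refine Finset.sum_congr rfl fun a _ => Finset.sum_congr rfl fun b _ => ?_
    rw [← AddChar.map_add_eq_mul]
    congr 1
    simp [Fin.sum_univ_two, piFinTwoEquiv]
    ring
  rw [key, sum_char_mul χ hχ, sum_char_mul χ hχ]
  by_cases h0 : z 0 = 0 <;> by_cases h1 : z 1 = 0
  · have : z = 0 := funext fun i => by fin_cases i <;> assumption
    simp [h0, h1, this, sq]
  all_goals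
    have : z ≠ 0 := fun h => by simp [h] at h0 h1
  · simp [h0, h1, this]
  · simp [h0, h1, this]
  · simp [h0, h1, this]

/-- raw (unnormalized) Fourier sum -/
def Wf (χ : AddChar F ℂ) (E : Finset (Fin 2 → F)) (m : Fin 2 → F) : ℂ :=
  ∑ x ∈ E, χ (-(∑ i, x i * m i))

lemma Wf_mul_conj (χ : AddChar F ℂ) (E : Finset (Fin 2 → F)) (v : Fin 2 → F) :
    Wf χ E v * (starRingEnd ℂ) (Wf χ E v)
      = ∑ x ∈ E, ∑ y ∈ E, χ (∑ i, (y i - x i) * v i) := by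
  rw [Wf, map_sum, Finset.sum_mul_sum]
  refine Finset.sum_congr rfl fun x _ => Finset.sum_congr rfl fun y _ => ?_
  rw [char_conj, ← AddChar.map_add_eq_mul]
  congr 1
  simp [Fin.sum_univ_two]
  ring

lemma cast_norm_sq (z : ℂ) : ((‖z‖^2 : ℝ) : ℂ) = z * (starRingEnd ℂ) z := by
  rw [Complex.mul_conj]
  norm_cast
  rw [Complex.sq_norm]

lemma plancherel (χ : AddChar F ℂ) (hχ : χ ≠ 1) (E : Finset (Fin 2 → F)) :
    ∑ v : Fin 2 → F, ‖Wf χ E v‖^2 = (Fintype.card F : ℝ)^2 * E.card := by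
  have key : ((∑ v : Fin 2 → F, ‖Wf χ E v‖^2 : ℝ) : ℂ)
      = ((Fintype.card F : ℝ)^2 * E.card : ℝ) := by
    rw [Complex.ofReal_sum]
    rw [Finset.sum_congr rfl fun (v : Fin 2 → F) _ => cast_norm_sq (Wf χ E v)]
    rw [Finset.sum_congr rfl fun (v : Fin 2 → F) _ => Wf_mul_conj χ E v]
    rw [Finset.sum_comm]
    have inner : ∀ x ∈ E, ∑ v : Fin 2 → F, ∑ y ∈ E, χ (∑ i, (y i - x i) * v i)
        = ((Fintype.card F : ℂ))^2 := by
      intro x hx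
      rw [Finset.sum_comm]
      have : ∀ y ∈ E, ∑ v : Fin 2 → F, χ (∑ i, (y i - x i) * v i)
          = if (fun i => y i - x i) = (0 : Fin 2 → F) then ((Fintype.card F : ℂ))^2 else 0 := by
        intro y _
        exact sum_char_dot χ hχ (fun i => y i - x i)
      rw [Finset.sum_congr rfl this]
      have hiff : ∀ y : Fin 2 → F, ((fun i => y i - x i) = (0 : Fin 2 → F)) ↔ y = x := by
        intro y
        constructor
        · intro h
          funext i
          have := congrFun h i
          simpa [sub_eq_zero] using this
        · intro h; subst h; funext i; simp
      rw [Finset.sum_congr rfl fun y _ => by rw [if_congr (hiff y) rfl rfl]]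
      rw [Finset.sum_ite_eq' E x]
      simp [hx]
    rw [Finset.sum_congr rfl inner, Finset.sum_const, nsmul_eq_mul]
    push_cast
    ring
  exact_mod_cast key

lemma incidence (htwo : (2:F) ≠ 0) {j : F} (hj : j ≠ 0) {v : Fin 2 → F} (hv : v ≠ 0) :
    (Finset.univ.filter (fun m : Fin 2 → F =>
      (m 0^2 + m 1^2 = j) ∧ ((m 0 - v 0)^2 + (m 1 - v 1)^2 = j))).card ≤ 2 := by
  set A := Finset.univ.filter (fun m : Fin 2 → F =>
      (m 0^2 + m 1^2 = j) ∧ ((m 0 - v 0)^2 + (m 1 - v 1)^2 = j)) with hA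
  set c := v 0^2 + v 1^2 with hc
  have hmem : ∀ m ∈ A, (m 0^2 + m 1^2 = j) ∧ ((m 0 - v 0)^2 + (m 1 - v 1)^2 = j) := by
    intro m hm; simpa [hA] using hm
  have hline : ∀ m ∈ A, 2*(m 0*v 0 + m 1*v 1) = c := by
    intro m hm
    obtain ⟨h1, h2⟩ := hmem m hm
    linear_combination h1 - h2
  rcases eq_or_ne c 0 with hc0 | hc0
  · have hem : ∀ m, m ∉ A := by
      intro m hm
      obtain ⟨h1, _⟩ := hmem m hm
      have hdv : m 0 * v 0 + m 1 * v 1 = 0 := by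
        have h := hline m hm
        rw [hc0] at h
        exact (mul_eq_zero.mp h).resolve_left htwo
      have hv0 : v 0 = 0 := by
        have h : j * v 0^2 = 0 := by
          linear_combination (-(v 0^2)) * h1 + (m 0 * v 0 - m 1 * v 1) * hdv + m 1^2 * hc0
        have := (mul_eq_zero.mp h).resolve_left hj
        exact pow_eq_zero_iff (two_ne_zero) |>.mp this
      have hv1 : v 1 = 0 := by
        have h : j * v 1^2 = 0 := by
          linear_combination (-(v 1^2)) * h1 + (m 1 * v 1 - m 0 * v 0) * hdv + m 0^2 * hc0
        have := (mul_eq_zero.mp h).resolve_left hj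
        exact pow_eq_zero_iff (two_ne_zero) |>.mp this
      exact hv (funext fun i => by fin_cases i <;> assumption)
    simp [Finset.eq_empty_of_forall_notMem hem]
  · rcases A.eq_empty_or_nonempty with hAe | ⟨m₀, hm₀⟩
    · simp [hAe]
    · set φ : (Fin 2 → F) → F := fun m => m 1 * v 0 - m 0 * v 1 with hφ
      have hsq : ∀ m ∈ A, (2*φ m)^2 = 4*j*c - c^2 := by
        intro m hm
        obtain ⟨h1, _⟩ := hmem m hm
        have h2 := hline m hm
        linear_combination (4*c) * h1 - (2*(m 0*v 0 + m 1*v 1) + c) * h2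
      have hrec : ∀ m ∈ A, ∀ n ∈ A, φ m = φ n → m = n := by
        intro m hm n hn hfe
        have hm2 := hline m hm
        have hn2 := hline n hn
        have h0 : 2 * (c * (m 0 - n 0)) = 0 := by
          linear_combination v 0 * hm2 - v 0 * hn2 - 2 * v 1 * hfe
        have h1 : 2 * (c * (m 1 - n 1)) = 0 := by
          linear_combination v 1 * hm2 - v 1 * hn2 + 2 * v 0 * hfe
        have e0 : m 0 = n 0 := sub_eq_zero.mp
          ((mul_eq_zero.mp ((mul_eq_zero.mp h0).resolve_left htwo)).resolve_left hc0)
        have e1 : m 1 = n 1 := sub_eq_zero.mp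
          ((mul_eq_zero.mp ((mul_eq_zero.mp h1).resolve_left htwo)).resolve_left hc0)
        exact funext fun i => by fin_cases i <;> assumption
      have hcard : A.card ≤ ({φ m₀, -φ m₀} : Finset F).card := by
        apply Finset.card_le_card_of_injOn φ
        · intro m hm
          have h1 := hsq m hm
          have h2 := hsq m₀ hm₀
          have hz : (2*φ m - 2*φ m₀) * (2*φ m + 2*φ m₀) = 0 := by
            linear_combination h1 - h2
          rcases mul_eq_zero.mp hz with h | h
          · have h' : (2:F) * φ m = 2 * φ m₀ := by linear_combination h
            have := mul_left_cancel₀ htwo h'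
            simp [this]
          · have h' : (2:F) * φ m = 2 * (-φ m₀) := by linear_combination h
            have := mul_left_cancel₀ htwo h'
            simp [this]
        · intro m hm n hn hfe
          exact hrec m hm n hn hfe
      calc A.card ≤ _ := hcard
        _ ≤ 2 := by
          apply le_trans (Finset.card_insert_le _ _)
          simp

lemma offdiag_sum_le (htwo : (2:F) ≠ 0) {j : F} (hj : j ≠ 0)
    (g : (Fin 2 → F) → ℝ) (hg : ∀ v, 0 ≤ g v) :
    ∑ p ∈ ((Finset.univ.filter (fun m : Fin 2 → F => m 0^2 + m 1^2 = j)) ×ˢ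
            (Finset.univ.filter (fun m : Fin 2 → F => m 0^2 + m 1^2 = j))).filter
            (fun p => p.1 ≠ p.2), g (p.1 - p.2)
      ≤ 2 * ∑ v : Fin 2 → F, g v := by
  set S := Finset.univ.filter (fun m : Fin 2 → F => m 0^2 + m 1^2 = j) with hS
  set P := (S ×ˢ S).filter (fun p => p.1 ≠ p.2) with hP
  have key := Finset.sum_fiberwise_of_maps_to
    (fun (p : (Fin 2 → F) × (Fin 2 → F)) (_ : p ∈ P) => Finset.mem_univ (p.1 - p.2))
    (fun p => g (p.1 - p.2))
  rw [← key]
  have hbound : ∀ v : Fin 2 → F,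
      ∑ p ∈ P.filter (fun p => p.1 - p.2 = v), g (p.1 - p.2) ≤ 2 * g v := by
    intro v
    have heq : ∑ p ∈ P.filter (fun p => p.1 - p.2 = v), g (p.1 - p.2)
        = (P.filter (fun p => p.1 - p.2 = v)).card * g v := by
      rw [Finset.sum_congr rfl (fun p hp => by
        rw [(Finset.mem_filter.mp hp).2]), Finset.sum_const, nsmul_eq_mul]
    rw [heq]
    have hcard : (P.filter (fun p => p.1 - p.2 = v)).card ≤ 2 := by
      rcases eq_or_ne v 0 with rfl | hv
      · have : P.filter (fun p => p.1 - p.2 = 0) = ∅ := by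
          apply Finset.eq_empty_of_forall_notMem
          intro p hp
          have h1 := Finset.mem_filter.mp hp
          have h2 := (Finset.mem_filter.mp h1.1).2
          exact h2 (sub_eq_zero.mp h1.2)
        simp [this]
      · refine le_trans (Finset.card_le_card_of_injOn (fun p => p.1) ?_ ?_)
          (incidence htwo hj hv)
        · intro p hp
          have h1 := Finset.mem_filter.mp hp
          have hmem := Finset.mem_product.mp (Finset.mem_filter.mp h1.1).1
          have hp1 : p.1 0^2 + p.1 1^2 = j := (Finset.mem_filter.mp hmem.1).2
          have hp2 : p.2 0^2 + p.2 1^2 = j := (Finset.mem_filter.mp hmem.2).2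
          have hd : p.2 = p.1 - v := by
            rw [← h1.2]; abel
          beta_reduce
          rw [Finset.mem_coe, Finset.mem_filter]
          refine ⟨Finset.mem_univ _, hp1, ?_⟩
          have e0 : p.2 0 = p.1 0 - v 0 := by rw [hd]; rfl
          have e1 : p.2 1 = p.1 1 - v 1 := by rw [hd]; rfl
          rw [← e0, ← e1]; exact hp2
        · intro p hp q hq hpq
          have hpq' : p.1 = q.1 := hpq
          have h1 := (Finset.mem_filter.mp hp).2
          have h2 := (Finset.mem_filter.mp hq).2
          have : p.2 = q.2 := by
            have h3 : p.1 - p.2 = p.1 - q.2 := by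
              rw [h1, hpq', h2]
            exact sub_right_injective h3
          exact Prod.ext hpq' this
    exact mul_le_mul_of_nonneg_right (by exact_mod_cast hcard) (hg v)
  refine le_trans (Finset.sum_le_sum (fun v _ => hbound v)) ?_
  rw [← Finset.mul_sum]

lemma sum_h_conj (χ : AddChar F ℂ) (E : Finset (Fin 2 → F)) (S : Finset (Fin 2 → F)) :
    ∑ x ∈ E, ((∑ m ∈ S, χ (-(∑ i, x i * m i)) * (starRingEnd ℂ) (Wf χ E m)) *
        (starRingEnd ℂ) (∑ m ∈ S, χ (-(∑ i, x i * m i)) * (starRingEnd ℂ) (Wf χ E m)))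
      = ∑ p ∈ S ×ˢ S,
          ((starRingEnd ℂ) (Wf χ E p.1) * Wf χ E p.2) * Wf χ E (p.1 - p.2) := by
  have step1 : ∀ x : Fin 2 → F, (∑ m ∈ S, χ (-(∑ i, x i * m i)) * (starRingEnd ℂ) (Wf χ E m)) *
        (starRingEnd ℂ) (∑ m ∈ S, χ (-(∑ i, x i * m i)) * (starRingEnd ℂ) (Wf χ E m))
      = ∑ m ∈ S, ∑ m' ∈ S, ((starRingEnd ℂ) (Wf χ E m) * Wf χ E m')
          * (χ (-(∑ i, x i * m i)) * χ (∑ i, x i * m' i)) := by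
    intro x
    rw [map_sum, Finset.sum_mul_sum]
    refine Finset.sum_congr rfl fun m _ => Finset.sum_congr rfl fun m' _ => ?_
    rw [map_mul, Complex.conj_conj, char_conj, neg_neg]
    ring
  rw [Finset.sum_congr rfl fun x _ => step1 x]
  rw [Finset.sum_comm]
  have step2 : ∀ m ∈ S, ∑ x ∈ E, ∑ m' ∈ S, ((starRingEnd ℂ) (Wf χ E m) * Wf χ E m')
          * (χ (-(∑ i, x i * m i)) * χ (∑ i, x i * m' i))
      = ∑ m' ∈ S, ((starRingEnd ℂ) (Wf χ E m) * Wf χ E m') * Wf χ E (m - m') := by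
    intro m _
    rw [Finset.sum_comm]
    refine Finset.sum_congr rfl fun m' _ => ?_
    rw [← Finset.mul_sum]
    congr 1
    rw [Wf]
    refine Finset.sum_congr rfl fun x _ => ?_
    rw [← AddChar.map_add_eq_mul]
    congr 1
    simp [Fin.sum_univ_two]
    ring
  rw [Finset.sum_congr rfl step2]
  exact (Finset.sum_product' S S
    (fun m m' => ((starRingEnd ℂ) (Wf χ E m) * Wf χ E m') * Wf χ E (m - m'))).symm

end Stmt16Aux

set_option maxHeartbeats 2000000 in
open Stmt16Aux in
theorem stmt_16 :
    ∃ C : ℝ, 0 < C ∧ ∀ (F : Type) [Field F] [Fintype F] [DecidableEq F],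
      Odd (Fintype.card F) →
      ∀ χ : AddChar F ℂ, χ ≠ 1 →
      ∀ (E : Finset (Fin 2 → F)) (j : F), j ≠ 0 →
        ∑ m ∈ Finset.univ.filter (fun m : Fin 2 → F => m 0 ^ 2 + m 1 ^ 2 = j),
            ‖ffFourier χ E m‖ ^ 2 ≤
          C * (E.card : ℝ) ^ ((3 : ℝ) / 2) / (Fintype.card F : ℝ) ^ 3 := by
  refine ⟨3, by norm_num, ?_⟩
  intro F _ _ _ hodd χ hχ E j hj
  set q : ℝ := (Fintype.card F : ℝ) with hqdef
  have hq0 : (0:ℝ) < q := by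
    rw [hqdef]; exact_mod_cast Fintype.card_pos
  have htwo : (2:F) ≠ 0 := by
    intro h2
    have h2' : ringChar F ∣ 2 := (ringChar.spec F 2).mp (by exact_mod_cast h2)
    have hp : (ringChar F).Prime := CharP.char_is_prime F (ringChar F)
    have hr2 : ringChar F = 2 := (Nat.prime_dvd_prime_iff_eq hp Nat.prime_two).mp h2'
    have heven := FiniteField.even_card_iff_char_two.mp hr2
    rcases hodd with ⟨k, hk⟩
    omega
  set S : Finset (Fin 2 → F) :=
    Finset.univ.filter (fun m : Fin 2 → F => m 0 ^ 2 + m 1 ^ 2 = j) with hSdef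
  set W : (Fin 2 → F) → ℂ := Wf χ E with hWdef
  have hWm : ∀ m, W m = ∑ x ∈ E, χ (-(∑ i, x i * m i)) := fun m => rfl
  set a : (Fin 2 → F) → ℝ := fun v => ‖W v‖ with hadef
  have ha0 : ∀ v, 0 ≤ a v := fun v => norm_nonneg _
  set e : ℝ := (E.card : ℝ) with hedef
  have he0 : (0:ℝ) ≤ e := by rw [hedef]; exact Nat.cast_nonneg _
  set s : ℝ := Real.sqrt e with hsdef
  have hs0 : (0:ℝ) ≤ s := Real.sqrt_nonneg _
  have hse : s^2 = e := Real.sq_sqrt he0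
  have hcardn : E.card ≤ Fintype.card F ^ 2 := by
    have h1 := Finset.card_le_univ E
    rwa [Fintype.card_fun, Fintype.card_fin] at h1
  have heq2 : e ≤ q^2 := by rw [hedef, hqdef]; exact_mod_cast hcardn
  have hsleq : s ≤ q := by
    rw [hsdef]
    calc Real.sqrt e ≤ Real.sqrt (q^2) := Real.sqrt_le_sqrt heq2
      _ = q := Real.sqrt_sq hq0.le
  set T : ℝ := ∑ m ∈ S, a m ^ 2 with hTdef
  have hT0 : (0:ℝ) ≤ T := Finset.sum_nonneg fun m _ => sq_nonneg _
  -- identify the goal LHS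
  have hLHS : ∑ m ∈ S, ‖ffFourier χ E m‖^2 = ((q^2)⁻¹)^2 * T := by
    rw [hTdef, Finset.mul_sum]
    refine Finset.sum_congr rfl fun m _ => ?_
    have h1 : ffFourier χ E m = ((Fintype.card F:ℂ)^2)⁻¹ * W m := rfl
    have h2 : ‖ffFourier χ E m‖ = (q^2)⁻¹ * a m := by
      rw [h1, norm_mul, norm_inv, norm_pow, Complex.norm_natCast, hadef]
    rw [h2, mul_pow]
  -- a at zero
  have ha0e : a 0 = e := by
    have hW0 : W 0 = (E.card : ℂ) := by
      rw [hWm 0]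
      have hone : ∀ x ∈ E, χ (-(∑ i, x i * (0 : Fin 2 → F) i)) = (1:ℂ) := by
        intro x _; simp
      rw [Finset.sum_congr rfl hone, Finset.sum_const, nsmul_eq_mul, mul_one]
    rw [hadef]
    show ‖W 0‖ = e
    rw [hW0, Complex.norm_natCast, hedef]
  set h : (Fin 2 → F) → ℂ :=
    fun x => ∑ m ∈ S, χ (-(∑ i, x i * m i)) * (starRingEnd ℂ) (W m) with hhdef
  -- step 1
  have hexp : ∀ m ∈ S, W m * (starRingEnd ℂ) (W m)
      = ∑ x ∈ E, χ (-(∑ i, x i * m i)) * (starRingEnd ℂ) (W m) := by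
    intro m _
    rw [hWm m]
    exact Finset.sum_mul _ _ _
  have hTc : ((T : ℝ) : ℂ) = ∑ x ∈ E, h x := by
    rw [hTdef, Complex.ofReal_sum]
    rw [Finset.sum_congr rfl fun m (_ : m ∈ S) => cast_norm_sq (W m)]
    rw [Finset.sum_congr rfl hexp]
    exact Finset.sum_comm
  have hT1 : T ≤ ∑ x ∈ E, ‖h x‖ := by
    calc T = ‖((T:ℝ):ℂ)‖ := by
          rw [Complex.norm_real, Real.norm_eq_abs, abs_of_nonneg hT0]
      _ = ‖∑ x ∈ E, h x‖ := by rw [hTc]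
      _ ≤ ∑ x ∈ E, ‖h x‖ := norm_sum_le _ _
  have hT2 : (∑ x ∈ E, ‖h x‖)^2 ≤ e * ∑ x ∈ E, ‖h x‖^2 := by
    have hcs := sq_sum_le_card_mul_sum_sq (s := E) (f := fun x => ‖h x‖)
    rw [hedef]
    exact_mod_cast hcs
  -- step 2
  have hZr : ∑ x ∈ E, ‖h x‖^2 ≤ ∑ p ∈ S ×ˢ S, a p.1 * a p.2 * a (p.1 - p.2) := by
    have hcast : ((∑ x ∈ E, ‖h x‖^2 : ℝ):ℂ)
        = ∑ p ∈ S ×ˢ S, ((starRingEnd ℂ) (W p.1) * W p.2) * W (p.1 - p.2) := by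
      rw [Complex.ofReal_sum]
      rw [Finset.sum_congr rfl fun x (_ : x ∈ E) => cast_norm_sq (h x)]
      rw [hhdef, hWdef]
      exact sum_h_conj χ E S
    calc ∑ x ∈ E, ‖h x‖^2 = ‖((∑ x ∈ E, ‖h x‖^2 : ℝ):ℂ)‖ := by
          rw [Complex.norm_real, Real.norm_eq_abs,
            abs_of_nonneg (Finset.sum_nonneg fun x _ => sq_nonneg _)]
      _ = ‖∑ p ∈ S ×ˢ S, ((starRingEnd ℂ) (W p.1) * W p.2) * W (p.1 - p.2)‖ := by rw [hcast]
      _ ≤ ∑ p ∈ S ×ˢ S, ‖((starRingEnd ℂ) (W p.1) * W p.2) * W (p.1 - p.2)‖ := norm_sum_le _ _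
      _ = ∑ p ∈ S ×ˢ S, a p.1 * a p.2 * a (p.1 - p.2) := by
          refine Finset.sum_congr rfl fun p _ => ?_
          rw [norm_mul, norm_mul, RCLike.norm_conj]
  -- split into diagonal and off-diagonal
  have hsplit : ∑ p ∈ S ×ˢ S, a p.1 * a p.2 * a (p.1 - p.2)
      = ∑ p ∈ (S ×ˢ S).filter (fun p => p.1 = p.2), a p.1 * a p.2 * a (p.1 - p.2)
        + ∑ p ∈ (S ×ˢ S).filter (fun p => ¬ p.1 = p.2), a p.1 * a p.2 * a (p.1 - p.2) :=
    (Finset.sum_filter_add_sum_filter_not _ _ _).symm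
  have hdiag : ∑ p ∈ (S ×ˢ S).filter (fun p => p.1 = p.2), a p.1 * a p.2 * a (p.1 - p.2)
      = e * T := by
    have himg : (S ×ˢ S).filter (fun p => p.1 = p.2)
        = S.image (fun m => (m, m)) := by
      ext p
      simp only [Finset.mem_filter, Finset.mem_product, Finset.mem_image]
      constructor
      · rintro ⟨⟨hp1, hp2⟩, h3⟩
        exact ⟨p.1, hp1, by rw [Prod.ext_iff]; exact ⟨rfl, h3⟩⟩
      · rintro ⟨m, hm, rfl⟩
        exact ⟨⟨hm, hm⟩, rfl⟩
    rw [himg, Finset.sum_image (fun m _ n _ hmn => ((Prod.ext_iff.mp hmn).1 : m = n))]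
    rw [hTdef, Finset.mul_sum]
    refine Finset.sum_congr rfl fun m _ => ?_
    rw [sub_self, ha0e]
    ring
  have hoffsq : (∑ p ∈ (S ×ˢ S).filter (fun p => ¬ p.1 = p.2),
        a p.1 * a p.2 * a (p.1 - p.2))^2 ≤ T^2 * (2 * (q^2 * e)) := by
    have hCS := Finset.sum_mul_sq_le_sq_mul_sq ((S ×ˢ S).filter (fun p => ¬ p.1 = p.2))
        (fun p => a p.1 * a p.2) (fun p => a (p.1 - p.2))
    have h1 : ∑ p ∈ (S ×ˢ S).filter (fun p => ¬ p.1 = p.2), (a p.1 * a p.2)^2 ≤ T^2 := by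
      calc ∑ p ∈ (S ×ˢ S).filter (fun p => ¬ p.1 = p.2), (a p.1 * a p.2)^2
          ≤ ∑ p ∈ S ×ˢ S, (a p.1 * a p.2)^2 :=
            Finset.sum_le_sum_of_subset_of_nonneg (Finset.filter_subset _ _)
              (fun p _ _ => sq_nonneg _)
        _ = ∑ m ∈ S, ∑ m' ∈ S, (a m * a m')^2 :=
            Finset.sum_product' S S (fun m m' => (a m * a m')^2)
        _ = ∑ m ∈ S, (a m ^2 * ∑ m' ∈ S, a m' ^2) := by
            refine Finset.sum_congr rfl fun m _ => ?_
            rw [Finset.mul_sum]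
            refine Finset.sum_congr rfl fun m' _ => ?_
            ring
        _ = T^2 := by
            rw [← Finset.sum_mul, ← hTdef, sq]
    have h2 : ∑ p ∈ (S ×ˢ S).filter (fun p => ¬ p.1 = p.2), a (p.1 - p.2)^2
        ≤ 2 * (q^2 * e) := by
      have hof := offdiag_sum_le htwo hj (fun v => a v ^ 2) (fun v => sq_nonneg _)
      rw [← hSdef] at hof
      have hpl : ∑ v : Fin 2 → F, a v ^2 = q^2 * e := by
        rw [hadef, hWdef, hqdef, hedef]
        exact plancherel χ hχ E
      rw [hpl] at hof
      exact hof
    have hnn1 : (0:ℝ) ≤ ∑ p ∈ (S ×ˢ S).filter (fun p => ¬ p.1 = p.2), (a p.1 * a p.2)^2 :=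
      Finset.sum_nonneg fun p _ => sq_nonneg _
    calc (∑ p ∈ (S ×ˢ S).filter (fun p => ¬ p.1 = p.2), a p.1 * a p.2 * a (p.1 - p.2))^2
        ≤ (∑ p ∈ (S ×ˢ S).filter (fun p => ¬ p.1 = p.2), (a p.1 * a p.2)^2)
            * ∑ p ∈ (S ×ˢ S).filter (fun p => ¬ p.1 = p.2), a (p.1 - p.2)^2 := hCS
      _ ≤ T^2 * (2 * (q^2 * e)) := by
          apply mul_le_mul h1 h2 (Finset.sum_nonneg fun p _ => sq_nonneg _) (sq_nonneg _)
  have hoff : ∑ p ∈ (S ×ˢ S).filter (fun p => ¬ p.1 = p.2), a p.1 * a p.2 * a (p.1 - p.2)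
      ≤ T * (2 * (q * s)) := by
    have hnn : (0:ℝ) ≤ ∑ p ∈ (S ×ˢ S).filter (fun p => ¬ p.1 = p.2),
        a p.1 * a p.2 * a (p.1 - p.2) :=
      Finset.sum_nonneg fun p _ => mul_nonneg (mul_nonneg (ha0 _) (ha0 _)) (ha0 _)
    have hb : (∑ p ∈ (S ×ˢ S).filter (fun p => ¬ p.1 = p.2),
        a p.1 * a p.2 * a (p.1 - p.2))^2 ≤ (T * (2 * (q * s)))^2 := by
      calc _ ≤ T^2 * (2 * (q^2 * e)) := hoffsq
        _ ≤ (T * (2 * (q * s)))^2 := by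
            have hexpand : (T * (2 * (q * s)))^2 = 4 * (T^2 * (q^2 * s^2)) := by ring
            rw [hexpand, hse]
            have hnn2 : (0:ℝ) ≤ T^2 * (q^2 * e) :=
              mul_nonneg (sq_nonneg T) (mul_nonneg (sq_nonneg q) he0)
            linarith
    have hTqs : (0:ℝ) ≤ T * (2 * (q * s)) :=
      mul_nonneg hT0 (mul_nonneg (by norm_num) (mul_nonneg hq0.le hs0))
    exact (pow_le_pow_iff_left₀ hnn hTqs two_ne_zero).mp hb
  -- combine
  have hmain : T^2 ≤ T * (e * (e + 2 * (q * s))) := by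
    calc T^2 ≤ (∑ x ∈ E, ‖h x‖)^2 := pow_le_pow_left₀ hT0 hT1 2
      _ ≤ e * ∑ x ∈ E, ‖h x‖^2 := hT2
      _ ≤ e * ∑ p ∈ S ×ˢ S, a p.1 * a p.2 * a (p.1 - p.2) :=
          mul_le_mul_of_nonneg_left hZr he0
      _ = e * (∑ p ∈ (S ×ˢ S).filter (fun p => p.1 = p.2), a p.1 * a p.2 * a (p.1 - p.2)
          + ∑ p ∈ (S ×ˢ S).filter (fun p => ¬ p.1 = p.2), a p.1 * a p.2 * a (p.1 - p.2)) := by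
          rw [← hsplit]
      _ ≤ e * (e * T + T * (2 * (q * s))) := by
          apply mul_le_mul_of_nonneg_left _ he0
          rw [hdiag]
          exact add_le_add_right hoff _
      _ = T * (e * (e + 2 * (q * s))) := by ring
  have hfinal : T ≤ 3 * (q * s^3) := by
    rcases eq_or_lt_of_le hT0 with hTz | hTpos
    · rw [← hTz]
      exact mul_nonneg (by norm_num) (mul_nonneg hq0.le (pow_nonneg hs0 3))
    · have hT' : T ≤ e * (e + 2 * (q * s)) := by
        have h' := hmain
        rw [sq] at h'
        exact le_of_mul_le_mul_left (by linarith [h']) hTpos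
      calc T ≤ e * (e + 2 * (q * s)) := hT'
        _ = s^3 * s + 2 * q * s^3 := by rw [← hse]; ring
        _ ≤ s^3 * q + 2 * q * s^3 := by
            apply add_le_add_left
            exact mul_le_mul_of_nonneg_left hsleq (pow_nonneg hs0 3)
        _ = 3 * (q * s^3) := by ring
  rw [hLHS]
  have hrpow : e ^ ((3:ℝ)/2) = s^3 := by
    rw [hsdef, show ((3:ℝ)/2) = ((1:ℝ)/2) * ((3:ℕ):ℝ) by norm_num,
      Real.rpow_mul he0, Real.rpow_natCast, ← Real.sqrt_eq_rpow]
  rw [hrpow]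
  calc ((q^2)⁻¹)^2 * T ≤ ((q^2)⁻¹)^2 * (3 * (q * s^3)) :=
        mul_le_mul_of_nonneg_left hfinal (sq_nonneg _)
    _ = 3 * s^3 / q^3 := by
        field_simp
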